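/- Let B = !![5, 2; 2, 1]. If φ = (φ₁, φ₂) ∈ ℝ² satisfies φ(B+I) ∈ ℤ² and φ ∉ ((1/2)ℤ)², then there exists θ ∈ ℤ² with φ = (3/4, 1/4) + θ, or φ = −(3/4, 1/4) + θ, or φ = (1/4, 1/4) + θ, or φ = −(1/4, 1/4) + θ. Moreover (3/4, 1/4) is not of the form ±(1/4, 1/4) + θ for any θ ∈ ℤ², so these two parameters represent distinct conjugacy classes. -/
import Mathlib


/-- The row vector `φ(B+I)` for `B = !![a, b; c, d]`. -/
noncomputable def rowBI (a b c d : ℤ) (v : ℝ × ℝ) : ℝ × ℝ :=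
  (((a : ℝ) + 1) * v.1 + (c : ℝ) * v.2, (b : ℝ) * v.1 + ((d : ℝ) + 1) * v.2)

/-- Membership in the half-integer lattice `((1/2)ℤ)²`. -/
def halfLat (v : ℝ × ℝ) : Prop :=
  (∃ n : ℤ, v.1 = (n : ℝ) / 2) ∧ (∃ n : ℤ, v.2 = (n : ℝ) / 2)

lemma cast_div' (k d : ℤ) (hd : d ≠ 0) (h : d ∣ k) : ((k / d : ℤ) : ℝ) = (k : ℝ) / d := by
  exact Int.cast_div_charZero h

/-- for `B = !![5, 2; 2, 1]`, every `φ` with `φ(B+I) ∈ ℤ²` and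
`φ ∉ ((1/2)ℤ)²` equals `±(3/4, 1/4) + θ` or `±(1/4, 1/4) + θ` for some `θ ∈ ℤ²`, and
`(3/4, 1/4)` is not of the form `±(1/4, 1/4) + θ`; so there are exactly two conjugacy
classes of irreducible representations. -/
theorem two_irreducible_classes (φ : ℝ × ℝ)
    (h1 : (∃ n : ℤ, (rowBI 5 2 2 1 φ).1 = n) ∧ (∃ n : ℤ, (rowBI 5 2 2 1 φ).2 = n))
    (h2 : ¬ halfLat φ) :
    (∃ θ : ℤ × ℤ,
      φ = (3 / 4 + (θ.1 : ℝ), 1 / 4 + (θ.2 : ℝ)) ∨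
      φ = (-(3 / 4) + (θ.1 : ℝ), -(1 / 4) + (θ.2 : ℝ)) ∨
      φ = (1 / 4 + (θ.1 : ℝ), 1 / 4 + (θ.2 : ℝ)) ∨
      φ = (-(1 / 4) + (θ.1 : ℝ), -(1 / 4) + (θ.2 : ℝ))) ∧
    ¬ (∃ θ : ℤ × ℤ,
      ((3 / 4 : ℝ), (1 / 4 : ℝ)) = (1 / 4 + (θ.1 : ℝ), 1 / 4 + (θ.2 : ℝ)) ∨
      ((3 / 4 : ℝ), (1 / 4 : ℝ)) = (-(1 / 4) + (θ.1 : ℝ), -(1 / 4) + (θ.2 : ℝ))) := by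
  obtain ⟨⟨m, hm⟩, ⟨n, hn⟩⟩ := h1
  simp only [rowBI] at hm hn
  norm_num at hm hn
  have hφ1 : φ.1 = ((m : ℝ) - n) / 4 := by linarith
  have hφ2 : φ.2 = (3 * (n : ℝ) - m) / 4 := by linarith
  obtain ⟨k, hkv, hφ1'⟩ : ∃ k : ℤ, k = m - n ∧ φ.1 = (k : ℝ) / 4 :=
    ⟨m - n, rfl, by rw [hφ1]; push_cast; ring⟩
  obtain ⟨l, hlv, hφ2'⟩ : ∃ l : ℤ, l = 3 * n - m ∧ φ.2 = (l : ℝ) / 4 :=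
    ⟨3 * n - m, rfl, by rw [hφ2]; push_cast; ring⟩
  have hkodd : k % 2 = 1 := by
    by_contra h
    have hk2 : (2 : ℤ) ∣ k := by omega
    have hl2' : l = 2 * n - k := by omega
    have hl2 : (2 : ℤ) ∣ l := by omega
    exact h2 ⟨⟨k / 2, by rw [hφ1', cast_div' k 2 two_ne_zero hk2]; ring⟩,
      ⟨l / 2, by rw [hφ2', cast_div' l 2 two_ne_zero hl2]; ring⟩⟩
  have hlodd : l % 2 = 1 := by omega
  constructor
  · have hcase : (k % 4 = 1 ∨ k % 4 = 3) ∧ (l % 4 = 1 ∨ l % 4 = 3) := by omega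
    obtain ⟨hk4 | hk4, hl4 | hl4⟩ := hcase
    · -- (1,1) : third case
      refine ⟨((k - 1) / 4, (l - 1) / 4), Or.inr (Or.inr (Or.inl ?_))⟩
      have c1 := cast_div' (k - 1) 4 (by norm_num) (by omega)
      have c2 := cast_div' (l - 1) 4 (by norm_num) (by omega)
      apply Prod.ext <;> simp [hφ1', hφ2', c1, c2] <;> push_cast <;> ring
    · -- k≡1, l≡3 : second case
      refine ⟨((k + 3) / 4, (l + 1) / 4), Or.inr (Or.inl ?_)⟩
      have c1 := cast_div' (k + 3) 4 (by norm_num) (by omega)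
      have c2 := cast_div' (l + 1) 4 (by norm_num) (by omega)
      apply Prod.ext <;> simp [hφ1', hφ2', c1, c2] <;> push_cast <;> ring
    · -- k≡3, l≡1 : first case
      refine ⟨((k - 3) / 4, (l - 1) / 4), Or.inl ?_⟩
      have c1 := cast_div' (k - 3) 4 (by norm_num) (by omega)
      have c2 := cast_div' (l - 1) 4 (by norm_num) (by omega)
      apply Prod.ext <;> simp [hφ1', hφ2', c1, c2] <;> push_cast <;> ring
    · -- (3,3) : fourth case
      refine ⟨((k + 1) / 4, (l + 1) / 4), Or.inr (Or.inr (Or.inr ?_))⟩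
      have c1 := cast_div' (k + 1) 4 (by norm_num) (by omega)
      have c2 := cast_div' (l + 1) 4 (by norm_num) (by omega)
      apply Prod.ext <;> simp [hφ1', hφ2', c1, c2] <;> push_cast <;> ring
  · rintro ⟨θ, h | h⟩ <;> rw [Prod.ext_iff] at h <;> obtain ⟨ha, hb⟩ := h
    · have : ((2 * θ.1 : ℤ) : ℝ) = ((1 : ℤ) : ℝ) := by push_cast; linarith
      have := Int.cast_injective this
      omega
    · have : ((2 * θ.2 : ℤ) : ℝ) = ((1 : ℤ) : ℝ) := by push_cast; linarith
      have := Int.cast_injective this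
      omega
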